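/- arXiv:2204.09963 — 2 statements merged into one kernel-verified Lean document; each statement's English description precedes it below -/
import Mathlib

section
/- Let Φ_1, ..., Φ_N : M_d(ℂ) → M_d(ℂ) be compatible quantum channels, i.e., there exists a channel Λ : M_d(ℂ) → M_d(ℂ)^{⊗N} whose s-th marginal is Φ_s for each s. Then for any orthonormal bases e^{(1)}, ..., e^{(N)} of ℂ^d, the POVMs A_s := (Φ_s*(|e^{(s)}_i⟩⟨e^{(s)}_i|))_{i=1}^d are compatible (jointly measurable): there exists a POVM B = (B_{i_1...i_N}) with d^N outcomes whose s-th marginal is A_s. -/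
open Matrix BigOperators ComplexOrder

noncomputable section

abbrev Mat (d : ℕ) := Matrix (Fin d) (Fin d) ℂ

/-- The Choi matrix of a linear map between matrix algebras. -/
def choiMat' {n m : Type*} [Fintype n] [Fintype m] [DecidableEq n]
    (Φ : Matrix n n ℂ →ₗ[ℂ] Matrix m m ℂ) : Matrix (n × m) (n × m) ℂ :=
  Matrix.of fun p q => Φ (Matrix.single p.1 q.1 1) p.2 q.2

/-- A quantum channel: completely positive (PSD Choi matrix) and trace preserving. -/
def IsCPTP' {n m : Type*} [Fintype n] [Fintype m] [DecidableEq n]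
    (Φ : Matrix n n ℂ →ₗ[ℂ] Matrix m m ℂ) : Prop :=
  (choiMat' Φ).PosSemidef ∧ ∀ X, (Φ X).trace = X.trace

/-- The Hilbert–Schmidt adjoint of `Φ` applied to `A`. -/
def adjMap {d : ℕ} (Φ : Mat d →ₗ[ℂ] Mat d) (A : Mat d) : Mat d :=
  Matrix.of fun i j => ((Φ (Matrix.single i j 1))ᴴ * A).trace

/-- Rank-one projector `|v⟩⟨v|`. -/
def outer {d : ℕ} (v : Fin d → ℂ) : Mat d :=
  Matrix.of fun i j => v i * star (v j)

/-- `e` is an orthonormal family (hence basis) of `ℂ^d`. -/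
def OrthonormalBasis' {d : ℕ} (e : Fin d → Fin d → ℂ) : Prop :=
  ∀ i j, (∑ k, star (e i k) * e j k) = if i = j then 1 else 0

/-- Insert the value `a` in position `s`, the remaining coordinates given by `h`. -/
def insertAt {N d : ℕ} (s : Fin N) (a : Fin d) (h : {t : Fin N // t ≠ s} → Fin d) :
    Fin N → Fin d :=
  fun t => if ht : t = s then a else h ⟨t, ht⟩

/-- The `s`-th marginal (partial trace over all tensor factors except the `s`-th)
of a matrix on `(ℂ^d)^{⊗N}`. -/
def marginal {N d : ℕ} (s : Fin N)
    (M : Matrix (Fin N → Fin d) (Fin N → Fin d) ℂ) : Mat d :=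
  Matrix.of fun a b => ∑ h : {t : Fin N // t ≠ s} → Fin d,
    M (insertAt s a h) (insertAt s b h)

/-- Compatibility of an `N`-tuple of channels on `M_d(ℂ)`: existence of a joint channel. -/
def Compatible {N d : ℕ} (Ψ : Fin N → (Mat d →ₗ[ℂ] Mat d)) : Prop :=
  ∃ Λ : Mat d →ₗ[ℂ] Matrix (Fin N → Fin d) (Fin N → Fin d) ℂ,
    IsCPTP' Λ ∧ ∀ s X, marginal s (Λ X) = Ψ s X

open Matrix BigOperators ComplexOrder
noncomputable section
namespace Aux

lemma complete {d : ℕ} {e : Fin d → Fin d → ℂ} (he : OrthonormalBasis' e) (a b : Fin d) :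
    ∑ j, e j a * star (e j b) = if a = b then 1 else 0 := by
  set U : Mat d := Matrix.of (fun i k => e i k) with hUdef
  have hU : U * Uᴴ = 1 := by
    ext i j
    have := congrArg star (he i j)
    simp only [star_sum, star_mul', star_star, apply_ite star, star_one, star_zero] at this
    simp only [Matrix.mul_apply, Matrix.conjTranspose_apply, Matrix.one_apply, hUdef,
      Matrix.of_apply]
    rw [← this]
  have hU2 : Uᴴ * U = 1 := mul_eq_one_comm.mp hU
  have h2 := congrFun (congrFun hU2 a) b
  simp only [Matrix.mul_apply, Matrix.conjTranspose_apply, Matrix.one_apply, hUdef,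
    Matrix.of_apply] at h2
  have := congrArg star h2
  simp only [star_sum, star_mul', star_star, apply_ite star, star_one, star_zero] at this
  rw [← this]

def insertEquiv {N d : ℕ} (s : Fin N) :
    (Fin d × ({t : Fin N // t ≠ s} → Fin d)) ≃ (Fin N → Fin d) where
  toFun p := insertAt s p.1 p.2
  invFun g := (g s, fun t => g t.1)
  left_inv := by
    rintro ⟨a, h⟩
    refine Prod.ext (by simp [insertAt]) ?_
    funext t
    simp [insertAt, t.2]
  right_inv := by
    intro g
    funext t
    by_cases ht : t = s <;> simp [insertAt, ht]

lemma prod_split {N : ℕ} (s : Fin N) (G : Fin N → ℂ) :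
    ∏ t, G t = G s * ∏ t : {t : Fin N // t ≠ s}, G t.1 := by
  rw [Fintype.prod_eq_mul_prod_compl s G]
  congr 1
  exact Finset.prod_subtype ({s}ᶜ : Finset (Fin N)) (fun x => by simp) G

lemma sum_prod_pi {ι κ : Type*} [Fintype ι] [DecidableEq ι] [Fintype κ] (F : ι → κ → ℂ) :
    ∑ h : ι → κ, ∏ t, F t (h t) = ∏ t, ∑ j, F t j := by
  rw [Finset.prod_univ_sum, Fintype.piFinset_univ]

end Aux

open Aux in
theorem compatible_channels_give_compatible_POVMs {N d : ℕ}
    (Φ : Fin N → (Mat d →ₗ[ℂ] Mat d)) (hΦ : ∀ s, IsCPTP' (Φ s))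
    (hcomp : Compatible Φ)
    (e : Fin N → Fin d → Fin d → ℂ) (he : ∀ s, OrthonormalBasis' (e s)) :
    ∃ B : (Fin N → Fin d) → Mat d,
      (∀ g, (B g).PosSemidef) ∧ (∑ g, B g) = 1 ∧
      ∀ (s : Fin N) (i : Fin d),
        (∑ g ∈ Finset.univ.filter fun g : Fin N → Fin d => g s = i, B g)
          = adjMap (Φ s) (outer (e s i)) := by
  obtain ⟨Λ, ⟨hpsd, htp⟩, hmarg⟩ := hcomp
  set v : (Fin N → Fin d) → (Fin N → Fin d) → ℂ := fun g f => ∏ t, e t (g t) (f t) with hv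
  have hherm : ∀ (a b : Fin d) (p q : Fin N → Fin d),
      star (Λ (Matrix.single a b 1) q p) = Λ (Matrix.single b a 1) p q :=
    fun a b p q => hpsd.1.apply (b, p) (a, q)
  refine ⟨fun g => Matrix.of fun a b =>
      ∑ p, ∑ q, star (Λ (Matrix.single a b 1) q p) * (v g q * star (v g p)),
    ?_, ?_, ?_⟩
  · intro g
    refine Matrix.PosSemidef.of_dotProduct_mulVec_nonneg ?_ ?_
    · ext a b
      simp only [Matrix.conjTranspose_apply, Matrix.of_apply, star_sum, star_mul', star_star]
      rw [Finset.sum_comm]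
      refine Finset.sum_congr rfl fun p _ => Finset.sum_congr rfl fun q _ => ?_
      rw [show Λ (Matrix.single b a 1) p q = star (Λ (Matrix.single a b 1) q p)
        from (hherm a b p q).symm]
      ring
    · intro u
      have key := hpsd.dotProduct_mulVec_nonneg (fun r : Fin d × (Fin N → Fin d) => star (u r.1) * v g r.2)
      have heq : star u ⬝ᵥ (Matrix.of fun a b =>
          ∑ p, ∑ q, star (Λ (Matrix.single a b 1) q p) * (v g q * star (v g p))) *ᵥ u
          = star (fun r : Fin d × (Fin N → Fin d) => star (u r.1) * v g r.2) ⬝ᵥ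
            (choiMat' Λ) *ᵥ (fun r : Fin d × (Fin N → Fin d) => star (u r.1) * v g r.2) := by
        simp only [dotProduct, Matrix.mulVec, Matrix.of_apply, Pi.star_apply,
          Fintype.sum_prod_type, choiMat', star_mul', star_star, Finset.mul_sum, Finset.sum_mul]
        simp only [hherm]
        rw [Finset.sum_comm]
        refine Finset.sum_congr rfl fun b _ => ?_
        rw [Finset.sum_comm]
        exact Finset.sum_congr rfl fun p _ => Finset.sum_congr rfl fun a _ =>
          Finset.sum_congr rfl fun q _ => by ring
      rw [heq]
      exact key
  · have hsumv : ∀ p q : Fin N → Fin d, ∑ g, v g q * star (v g p) = if q = p then 1 else 0 := by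
      intro p q
      have h1 : ∀ g : Fin N → Fin d, v g q * star (v g p)
          = ∏ t, (e t (g t) (q t) * star (e t (g t) (p t))) := by
        intro g
        rw [hv]
        simp only
        rw [star_prod, ← Finset.prod_mul_distrib]
      simp only [h1]
      rw [sum_prod_pi (fun t j => e t j (q t) * star (e t j (p t)))]
      have h2 : ∀ t : Fin N, ∑ j, e t j (q t) * star (e t j (p t)) = if q t = p t then 1 else 0 :=
        fun t => complete (he t) (q t) (p t)
      simp only [h2]
      rw [Finset.prod_boole]
      simp [funext_iff]
    ext a b
    simp only [Matrix.sum_apply, Matrix.of_apply, Matrix.one_apply]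
    rw [Finset.sum_comm]
    have h3 : ∀ p : Fin N → Fin d,
        ∑ g : Fin N → Fin d, ∑ q : Fin N → Fin d,
          star (Λ (Matrix.single a b 1) q p) * (v g q * star (v g p))
        = star (Λ (Matrix.single a b 1) p p) := by
      intro p
      rw [Finset.sum_comm]
      calc ∑ q : Fin N → Fin d, ∑ g : Fin N → Fin d,
            star (Λ (Matrix.single a b 1) q p) * (v g q * star (v g p))
          = ∑ q : Fin N → Fin d, star (Λ (Matrix.single a b 1) q p)
              * (if q = p then 1 else 0) := by
            refine Finset.sum_congr rfl fun q _ => ?_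
            rw [← Finset.mul_sum, hsumv p q]
        _ = _ := by simp
    simp only [h3]
    have h4 : ∑ p : Fin N → Fin d, Λ (Matrix.single a b 1) p p
        = (Matrix.single a b (1:ℂ)).trace := by
      rw [← htp]; rfl
    rw [← star_sum, h4]
    by_cases hab : a = b
    · subst hab; simp [Matrix.trace_single_eq_same]
    · simp [Matrix.trace, Matrix.diag, Matrix.single, hab, Finset.sum_ite_eq]
      exact fun h => hab h.symm
  · intro s i
    have hvins : ∀ (c : Fin d) (h : {t : Fin N // t ≠ s} → Fin d) (c' : Fin d)
        (h' : {t : Fin N // t ≠ s} → Fin d),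
        v (insertAt s c h) (insertAt s c' h')
          = e s c c' * ∏ t' : {t : Fin N // t ≠ s}, e t'.1 (h t') (h' t') := by
      intro c h c' h'
      rw [hv]
      simp only
      rw [prod_split s]
      congr 1
      · simp [insertAt]
      · exact Finset.prod_congr rfl fun t _ => by simp [insertAt, t.2]
    have hkey : ∀ qh ph : {t : Fin N // t ≠ s} → Fin d,
        ∑ h : {t : Fin N // t ≠ s} → Fin d,
          (∏ t' : {t : Fin N // t ≠ s}, e t'.1 (h t') (qh t'))
            * star (∏ t' : {t : Fin N // t ≠ s}, e t'.1 (h t') (ph t'))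
          = if qh = ph then 1 else 0 := by
      intro qh ph
      have h1 : ∀ h : {t : Fin N // t ≠ s} → Fin d,
          (∏ t' : {t : Fin N // t ≠ s}, e t'.1 (h t') (qh t'))
            * star (∏ t' : {t : Fin N // t ≠ s}, e t'.1 (h t') (ph t'))
          = ∏ t' : {t : Fin N // t ≠ s}, (e t'.1 (h t') (qh t') * star (e t'.1 (h t') (ph t'))) := by
        intro h
        rw [star_prod, ← Finset.prod_mul_distrib]
      simp only [h1]
      rw [sum_prod_pi (fun (t' : {t : Fin N // t ≠ s}) j => e t'.1 j (qh t') * star (e t'.1 j (ph t')))]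
      have h2 : ∀ t' : {t : Fin N // t ≠ s},
          ∑ j, e t'.1 j (qh t') * star (e t'.1 j (ph t')) = if qh t' = ph t' then 1 else 0 :=
        fun t' => complete (he t'.1) (qh t') (ph t')
      simp only [h2]
      rw [Finset.prod_boole]
      simp [funext_iff]
    have hre : ∀ f : (Fin N → Fin d) → ℂ, ∑ p, f p
        = ∑ pc : Fin d, ∑ ph : {t : Fin N // t ≠ s} → Fin d, f (insertAt s pc ph) := by
      intro f
      rw [← Equiv.sum_comp (insertEquiv s) f, Fintype.sum_prod_type]
      rfl
    ext a b
    simp only [Matrix.sum_apply, Matrix.of_apply]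
    rw [Finset.sum_filter]
    rw [← Equiv.sum_comp (insertEquiv s) (fun g => if g s = i then
      (∑ p, ∑ q, star (Λ (Matrix.single a b 1) q p) * (v g q * star (v g p))) else 0)]
    rw [Fintype.sum_prod_type]
    have hins : ∀ (c : Fin d) (h : {t : Fin N // t ≠ s} → Fin d), insertAt s c h s = c := by
      intro c h; simp [insertAt]
    simp only [insertEquiv, Equiv.coe_fn_mk, hins]
    simp only [Finset.sum_ite_irrel, Finset.sum_const_zero, Finset.sum_ite_eq',
      Finset.mem_univ, if_true]
    conv_lhs => enter [2, h]; rw [hre]; enter [2, pc, 2, ph]; rw [hre]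
    simp only [hvins]
    rw [Finset.sum_comm]
    conv_lhs => enter [2, pc, 2, ph, 2, qc]; rw [Finset.sum_comm]
    conv_lhs => enter [2, pc]; rw [Finset.sum_comm]
    conv_lhs => enter [2, pc, 2, w]; rw [Finset.sum_comm]
    conv_lhs => enter [2, pc, 2, w, 2, w2]; rw [Finset.sum_comm]
    have hinner : ∀ (pc qc : Fin d) (ph qh : {t : Fin N // t ≠ s} → Fin d),
        ∑ h : {t : Fin N // t ≠ s} → Fin d,
          star (Λ (Matrix.single a b 1) (insertAt s qc qh) (insertAt s pc ph))
            * ((e s i qc * ∏ t' : {t : Fin N // t ≠ s}, e t'.1 (h t') (qh t'))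
              * star (e s i pc * ∏ t' : {t : Fin N // t ≠ s}, e t'.1 (h t') (ph t')))
        = star (Λ (Matrix.single a b 1) (insertAt s qc qh) (insertAt s pc ph))
            * (e s i qc * star (e s i pc)) * (if qh = ph then 1 else 0) := by
      intro pc qc ph qh
      calc _ = ∑ h : {t : Fin N // t ≠ s} → Fin d,
            (star (Λ (Matrix.single a b 1) (insertAt s qc qh) (insertAt s pc ph))
              * (e s i qc * star (e s i pc)))
            * ((∏ t' : {t : Fin N // t ≠ s}, e t'.1 (h t') (qh t'))
              * star (∏ t' : {t : Fin N // t ≠ s}, e t'.1 (h t') (ph t'))) :=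
          Finset.sum_congr rfl fun h _ => by simp only [star_mul']; ring
        _ = _ := by rw [← Finset.mul_sum, hkey qh ph]
    simp only [hinner]
    simp only [mul_ite, mul_one, mul_zero, Finset.sum_ite_irrel, Finset.sum_const_zero,
      Finset.sum_ite_eq', Finset.mem_univ, if_true]
    conv_lhs => enter [2, pc]; rw [Finset.sum_comm]
    have hmar : ∀ pc qc : Fin d,
        ∑ ph : {t : Fin N // t ≠ s} → Fin d,
          star (Λ (Matrix.single a b 1) (insertAt s qc ph) (insertAt s pc ph))
        = star ((Φ s) (Matrix.single a b 1) qc pc) := by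
      intro pc qc
      rw [← star_sum]
      congr 1
      rw [← hmarg s (Matrix.single a b 1)]
      rfl
    have hfac : ∀ pc qc : Fin d,
        ∑ ph : {t : Fin N // t ≠ s} → Fin d,
          star (Λ (Matrix.single a b 1) (insertAt s qc ph) (insertAt s pc ph))
            * (e s i qc * star (e s i pc))
        = star ((Φ s) (Matrix.single a b 1) qc pc) * (e s i qc * star (e s i pc)) := by
      intro pc qc
      rw [← Finset.sum_mul, hmar pc qc]
    simp only [hfac]
    simp only [adjMap, Matrix.of_apply, Matrix.trace, Matrix.diag, Matrix.mul_apply,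
      Matrix.conjTranspose_apply, outer]
end
end
end

section
/- Let B, C be d × d positive semidefinite matrices with unit diagonal, and let e be the canonical basis and f an orthonormal basis unbiased with respect to the canonical basis. Then (G_{Σ_B, can} − ω) and (G_{Σ_C, f} − ω) are orthogonal in the Hilbert-Schmidt inner product, where G_{Σ_B, can} = |conj(B)⟩⟨conj(B)| ∘ Z_can and G_{Σ_C, f} = |conj(C)⟩⟨conj(C)| ∘ Z_f (∘ denoting the entrywise/Hadamard product). -/
open Matrix BigOperators ComplexOrder

noncomputable section

/-- The matrix `Z_e = ∑ i |e_i ⊗ conj(e_i)⟩⟨e_i ⊗ conj(e_i)|` on `ℂ^d ⊗ ℂ^d`. -/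
def ZMat {d : ℕ} (e : Fin d → Fin d → ℂ) :
    Matrix (Fin d × Fin d) (Fin d × Fin d) ℂ :=
  Matrix.of fun p q =>
    ∑ i, (e i p.1 * star (e i p.2)) * star (e i q.1 * star (e i q.2))

/-- The maximally entangled state `ω = (1/d) ∑ ij |ii⟩⟨jj|`. -/
def omegaMat (d : ℕ) : Matrix (Fin d × Fin d) (Fin d × Fin d) ℂ :=
  Matrix.of fun p q =>
    (if p.1 = p.2 then 1 else 0) * (if q.1 = q.2 then 1 else 0) / (d : ℂ)

/-- Rank-one projector `|v⟩⟨v|` for a vector on the doubled index set. -/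
def outerP {d : ℕ} (v : Fin d × Fin d → ℂ) :
    Matrix (Fin d × Fin d) (Fin d × Fin d) ℂ :=
  Matrix.of fun p q => v p * star (v q)

/-- Vectorization of the entrywise conjugate of a matrix. -/
def vecConj {d : ℕ} (B : Matrix (Fin d) (Fin d) ℂ) : Fin d × Fin d → ℂ :=
  fun p => star (B p.1 p.2)

/-- The canonical basis of `ℂ^d`. -/
def canBasis (d : ℕ) : Fin d → Fin d → ℂ := fun i k => if k = i then 1 else 0

/-- The "G" matrix of the Schur channel `Σ_B` in the basis `e`. -/
def GSchur {d : ℕ} (B : Matrix (Fin d) (Fin d) ℂ) (e : Fin d → Fin d → ℂ) :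
    Matrix (Fin d × Fin d) (Fin d × Fin d) ℂ :=
  Matrix.hadamard (outerP (vecConj B)) (ZMat e)

lemma X_zero {d : ℕ} (B : Matrix (Fin d) (Fin d) ℂ) {q p : Fin d × Fin d}
    (h : ¬ (q.1 = q.2 ∧ p.1 = p.2)) :
    (GSchur B (canBasis d) - omegaMat d) q p = 0 := by
  have hZ : ZMat (canBasis d) q p = 0 := by
    unfold ZMat canBasis
    simp only [Matrix.of_apply]
    apply Finset.sum_eq_zero
    intro i _
    by_cases h1 : q.1 = i <;> by_cases h2 : q.2 = i <;>
      by_cases h3 : p.1 = i <;> by_cases h4 : p.2 = i <;> simp_all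
  have hω : omegaMat d q p = 0 := by
    unfold omegaMat
    push_neg at h
    by_cases h1 : q.1 = q.2
    · simp [Matrix.of_apply, h1, h h1]
    · simp [Matrix.of_apply, h1]
  simp [GSchur, Matrix.sub_apply, Matrix.hadamard_apply, hZ, hω]

lemma Y_zero {d : ℕ} (hd : 0 < d) (C : Matrix (Fin d) (Fin d) ℂ)
    (hCdiag : ∀ i, C i i = 1) (f : Fin d → Fin d → ℂ)
    (hunb : ∀ j s, ‖f j s‖ = 1 / Real.sqrt d)
    {q p : Fin d × Fin d} (h1 : q.1 = q.2) (h2 : p.1 = p.2) :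
    (GSchur C f - omegaMat d) q p = 0 := by
  have hd' : (d : ℂ) ≠ 0 := by exact_mod_cast hd.ne'
  have habs : ∀ k s, (f k s * star (f k s)) = (1 / d : ℂ) := by
    intro k s
    rw [Complex.star_def, Complex.mul_conj, Complex.normSq_eq_norm_sq, hunb]
    rw [div_pow, one_pow, Real.sq_sqrt (Nat.cast_nonneg d)]
    push_cast
    ring
  have hZ : ZMat f q p = 1 / d := by
    unfold ZMat
    simp only [Matrix.of_apply, h1, h2]
    have : ∀ k ∈ Finset.univ, (f k q.2 * star (f k q.2)) *
        star (f k p.2 * star (f k p.2)) = 1 / (d : ℂ) ^ 2 := by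
      intro k _
      rw [habs, habs]
      simp
      ring
    rw [Finset.sum_congr rfl this]
    simp [Finset.card_univ]
    field_simp
  have hO : outerP (vecConj C) q p = 1 := by
    unfold outerP vecConj
    simp only [Matrix.of_apply, h1, h2, hCdiag]
    simp
  have hω : omegaMat d q p = 1 / d := by
    unfold omegaMat
    simp [Matrix.of_apply, h1, h2]
  simp [GSchur, Matrix.sub_apply, Matrix.hadamard_apply, hZ, hO, hω]

theorem Schur_G_orthogonal {d : ℕ} (hd : 0 < d)
    (B C : Matrix (Fin d) (Fin d) ℂ)
    (hB : B.PosSemidef) (hBdiag : ∀ i, B i i = 1)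
    (hC : C.PosSemidef) (hCdiag : ∀ i, C i i = 1)
    (f : Fin d → Fin d → ℂ) (hf : OrthonormalBasis' f)
    (hunb : ∀ j s, ‖f j s‖ = 1 / Real.sqrt d) :
    (((GSchur B (canBasis d) - omegaMat d))ᴴ * (GSchur C f - omegaMat d)).trace = 0 := by
  rw [Matrix.trace]
  apply Finset.sum_eq_zero
  intro p _
  rw [Matrix.diag_apply, Matrix.mul_apply]
  apply Finset.sum_eq_zero
  intro q _
  by_cases h : q.1 = q.2 ∧ p.1 = p.2
  · rw [Y_zero hd C hCdiag f hunb h.1 h.2, mul_zero]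
  · rw [Matrix.conjTranspose_apply, X_zero B h, star_zero, zero_mul]
end
end
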